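/- Fix integers K, L ≥ 1 and ρ > 0. Let x : [0,∞) → ℝ^{K×L} be differentiable solving dx_{ij}/dt = ρ(x_{i·}(t) x_{·j}(t) − x_{ij}(t)) for all t ≥ 0 and all i,j, where x_{i·}(t) = ∑_{j=1}^L x_{ij}(t) and x_{·j}(t) = ∑_{i=1}^K x_{ij}(t), with x_{ij}(0) > 0 for all i,j and ∑_{i,j} x_{ij}(0) = 1. Define I_T = ∫_0^T ∑_{i,j} (x_{ij}(t) − x_{i·}(t)x_{·j}(t))^2 / x_{ij}(t) dt. Then as T → ∞, I_T converges to the finite limit ρ^{-1} ∑_{i=1}^K ∑_{j=1}^L x_{i·}(0) x_{·j}(0) log( x_{i·}(0) x_{·j}(0) / x_{ij}(0) ). -/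

import Mathlib

open Filter

/-- A function with vanishing derivative on `[0, ∞)` is constant there. -/
private lemma aux_const_of_deriv {f : ℝ → ℝ} (hf : ∀ t, 0 ≤ t → HasDerivAt f 0 t) :
    ∀ t, 0 ≤ t → f t = f 0 := by
  intro t ht
  exact constant_of_has_deriv_right_zero
    (fun s hs => ((hf s hs.1).continuousAt).continuousWithinAt)
    (fun s hs => (hf s hs.1).hasDerivWithinAt) t (Set.mem_Icc.2 ⟨ht, le_rfl⟩)


private lemma aux_pos {ρ a c : ℝ} (ha : 0 < a) (hac : 0 < a + c) {t : ℝ} (ht : 0 ≤ t)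
    (hρ : 0 < ρ) : 0 < a + c * Real.exp (-(ρ * t)) := by
  have h1 : 0 < Real.exp (-(ρ * t)) := Real.exp_pos _
  have h2 : Real.exp (-(ρ * t)) ≤ 1 := Real.exp_le_one_iff.2 (by nlinarith)
  nlinarith

private lemma aux_deriv {ρ a c : ℝ} (hρ : 0 < ρ) (ha : 0 < a) (hac : 0 < a + c) {t : ℝ}
    (ht : 0 ≤ t) :
    HasDerivAt (fun u => ρ⁻¹ * (a * Real.log (a + c * Real.exp (-(ρ * u))) - c * Real.exp (-(ρ * u))))
      ((c * Real.exp (-(ρ * t))) ^ 2 / (a + c * Real.exp (-(ρ * t)))) t := by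
  have he : HasDerivAt (fun u : ℝ => Real.exp (-(ρ * u))) (Real.exp (-(ρ * t)) * (-ρ)) t := by
    simpa using (((hasDerivAt_id t).const_mul ρ).neg).exp
  have hden : HasDerivAt (fun u => a + c * Real.exp (-(ρ * u)))
      (c * (Real.exp (-(ρ * t)) * (-ρ))) t := (he.const_mul c).const_add a
  have hpos := aux_pos ha hac ht hρ
  have hlog : HasDerivAt (fun u => Real.log (a + c * Real.exp (-(ρ * u))))
      (c * (Real.exp (-(ρ * t)) * (-ρ)) / (a + c * Real.exp (-(ρ * t)))) t := hden.log hpos.ne'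
  have h := ((hlog.const_mul a).fun_sub (he.const_mul c)).const_mul ρ⁻¹
  refine h.congr_deriv ?_
  field_simp
  ring

private lemma aux_term_tendsto {ρ a : ℝ} (c : ℝ) (hρ : 0 < ρ) (ha : 0 < a) :
    Tendsto (fun T : ℝ =>
        ρ⁻¹ * (a * Real.log (a + c * Real.exp (-(ρ * T))) - c * Real.exp (-(ρ * T)))) atTop
      (nhds (ρ⁻¹ * (a * Real.log a))) := by
  have h1 : Tendsto (fun T : ℝ => Real.exp (-(ρ * T))) atTop (nhds 0) := by
    apply Real.tendsto_exp_atBot.comp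
    exact tendsto_neg_atTop_atBot.comp (Tendsto.const_mul_atTop hρ tendsto_id)
  have h2 : ContinuousAt (fun u : ℝ => ρ⁻¹ * (a * Real.log (a + c * u) - c * u)) 0 := by
    have hlog : ContinuousAt Real.log (a + c * 0) := by
      simpa using Real.continuousAt_log ha.ne'
    have hin : ContinuousAt (fun u : ℝ => a + c * u) 0 := by fun_prop
    have hcomp := ContinuousAt.comp (f := fun u : ℝ => a + c * u) (g := Real.log) hlog hin
    exact continuousAt_const.mul ((continuousAt_const.mul hcomp).sub (continuousAt_const.mul continuousAt_id))
  have h3 := h2.tendsto.comp h1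
  simpa [Function.comp_def] using h3

private lemma aux_integral_tendsto (K L : ℕ) (ρ : ℝ) (hρ : 0 < ρ)
    (a c : Fin K → Fin L → ℝ) (ha : ∀ i j, 0 < a i j) (hac : ∀ i j, 0 < a i j + c i j) :
    Tendsto (fun T : ℝ => ∫ t in (0:ℝ)..T, ∑ i, ∑ j,
        (c i j * Real.exp (-(ρ * t))) ^ 2 / (a i j + c i j * Real.exp (-(ρ * t)))) atTop
      (nhds ((∑ i, ∑ j, ρ⁻¹ * (a i j * Real.log (a i j)))
        - ∑ i, ∑ j, ρ⁻¹ * (a i j * Real.log (a i j + c i j) - c i j))) := by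
  have hI : ∀ T : ℝ, 0 ≤ T → (∫ t in (0:ℝ)..T, ∑ i, ∑ j,
      (c i j * Real.exp (-(ρ * t))) ^ 2 / (a i j + c i j * Real.exp (-(ρ * t))))
      = (∑ i, ∑ j, ρ⁻¹ * (a i j * Real.log (a i j + c i j * Real.exp (-(ρ * T)))
          - c i j * Real.exp (-(ρ * T))))
        - ∑ i, ∑ j, ρ⁻¹ * (a i j * Real.log (a i j + c i j) - c i j) := by
    intro T hT
    have h := intervalIntegral.integral_eq_sub_of_hasDerivAt
      (f := fun t => ∑ i, ∑ j, ρ⁻¹ * (a i j * Real.log (a i j + c i j * Real.exp (-(ρ * t)))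
          - c i j * Real.exp (-(ρ * t))))
      (f' := fun t => ∑ i, ∑ j,
        (c i j * Real.exp (-(ρ * t))) ^ 2 / (a i j + c i j * Real.exp (-(ρ * t))))
      (a := 0) (b := T) ?_ ?_
    · rw [h]
      congr 1
      simp [Real.exp_zero]
    · intro t htm
      rw [Set.uIcc_of_le hT] at htm
      exact HasDerivAt.fun_sum fun i _ => HasDerivAt.fun_sum fun j _ =>
        aux_deriv hρ (ha i j) (hac i j) htm.1
    · apply ContinuousOn.intervalIntegrable
      rw [Set.uIcc_of_le hT]
      apply continuousOn_finset_sum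
      intro i _
      apply continuousOn_finset_sum
      intro j _
      apply ContinuousOn.div
      · fun_prop
      · fun_prop
      · intro t htm
        exact (aux_pos (ha i j) (hac i j) htm.1 hρ).ne'
  have hlim : Tendsto (fun T : ℝ => ∑ i, ∑ j, ρ⁻¹ *
      (a i j * Real.log (a i j + c i j * Real.exp (-(ρ * T))) - c i j * Real.exp (-(ρ * T))))
      atTop (nhds (∑ i, ∑ j, ρ⁻¹ * (a i j * Real.log (a i j)))) := by
    apply tendsto_finset_sum
    intro i _
    apply tendsto_finset_sum
    intro j _
    exact aux_term_tendsto (c i j) hρ (ha i j)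
  refine Tendsto.congr' ?_ (hlim.sub_const _)
  filter_upwards [eventually_ge_atTop (0:ℝ)] with T hT
  exact (hI T hT).symm

/-- Along a differentiable solution of the deterministic recombination
equation with `ρ > 0` and strictly positive initial frequencies summing to 1, the accumulated
information `I_T` converges, as `T → ∞`, to the finite limit
`ρ⁻¹ ∑_{i,j} x_{i·}(0) x_{·j}(0) log(x_{i·}(0) x_{·j}(0) / x_{ij}(0))`. -/
theorem deterministic_information_limit (K L : ℕ) (hK : 1 ≤ K) (hL : 1 ≤ L)
    (ρ : ℝ) (hρ : 0 < ρ)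
    (x : ℝ → Fin K → Fin L → ℝ)
    (hode : ∀ t, 0 ≤ t → ∀ i j, HasDerivAt (fun s => x s i j)
      (ρ * ((∑ j', x t i j') * (∑ i', x t i' j) - x t i j)) t)
    (hx0 : ∀ i j, 0 < x 0 i j) (hsum0 : ∑ i, ∑ j, x 0 i j = 1) :
    Tendsto (fun T : ℝ => ∫ t in (0 : ℝ)..T,
        ∑ i, ∑ j, (x t i j - (∑ j', x t i j') * (∑ i', x t i' j)) ^ 2 / x t i j)
      atTop
      (nhds (ρ⁻¹ * ∑ i, ∑ j, (∑ j', x 0 i j') * (∑ i', x 0 i' j) *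
        Real.log ((∑ j', x 0 i j') * (∑ i', x 0 i' j) / x 0 i j))) := by
  -- Step A: the total mass `S` satisfies `S' = ρ (S² - S)` on `[0,∞)`.
  have hSderiv : ∀ t, 0 ≤ t → HasDerivAt (fun s => ∑ i, ∑ j, x s i j)
      (ρ * ((∑ i, ∑ j, x t i j) ^ 2 - ∑ i, ∑ j, x t i j)) t := by
    intro t ht
    have h1 : HasDerivAt (fun s => ∑ i, ∑ j, x s i j)
        (∑ i, ∑ j, ρ * ((∑ j', x t i j') * (∑ i', x t i' j) - x t i j)) t := by
      apply HasDerivAt.fun_sum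
      intro i _
      exact HasDerivAt.fun_sum fun j _ => hode t ht i j
    convert h1 using 1
    have e2 : (∑ j, ∑ i', x t i' j) = ∑ i, ∑ j, x t i j := Finset.sum_comm
    calc ρ * ((∑ i, ∑ j, x t i j) ^ 2 - ∑ i, ∑ j, x t i j)
        = ρ * ((∑ i, ∑ j', x t i j') * (∑ j, ∑ i', x t i' j) - ∑ i, ∑ j, x t i j) := by
          rw [e2]; ring
      _ = ρ * ((∑ i, (∑ j', x t i j') * (∑ j, ∑ i', x t i' j)) - ∑ i, ∑ j, x t i j) := by
          rw [Finset.sum_mul]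
      _ = ρ * ((∑ i, ∑ j, (∑ j', x t i j') * (∑ i', x t i' j)) - ∑ i, ∑ j, x t i j) := by
          simp only [Finset.mul_sum]
      _ = ∑ i, ∑ j, ρ * ((∑ j', x t i j') * (∑ i', x t i' j) - x t i j) := by
          simp only [mul_sub, Finset.mul_sum, Finset.sum_sub_distrib]
  -- Step B: extended total mass, continuous on all of `ℝ`.
  have hScont : Continuous fun t : ℝ => ∑ i, ∑ j, x (max t 0) i j := by
    rw [continuous_iff_continuousAt]
    intro t
    have h1 : ContinuousAt (fun s => ∑ i, ∑ j, x s i j) (max t 0) :=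
      (hSderiv _ (le_max_right t 0)).continuousAt
    have hmaxc : ContinuousAt (fun u : ℝ => max u 0) t :=
      (continuous_id.max continuous_const).continuousAt
    have h2 := ContinuousAt.comp (g := fun s => ∑ i, ∑ j, x s i j)
      (f := fun u : ℝ => max u 0) h1 hmaxc
    exact h2
  -- Step C: its primitive.
  have hF : ∀ t : ℝ, HasDerivAt (fun u => ∫ s in (0:ℝ)..u, ∑ i, ∑ j, x (max s 0) i j)
      (∑ i, ∑ j, x (max t 0) i j) t := fun t =>
    intervalIntegral.integral_hasDerivAt_right (hScont.intervalIntegrable 0 t)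
      (hScont.stronglyMeasurableAtFilter _ _) hScont.continuousAt
  -- Step D: total mass is identically 1 on `[0,∞)`.
  have hS1 : ∀ t, 0 ≤ t → (∑ i, ∑ j, x t i j) = 1 := by
    intro t ht
    set F : ℝ → ℝ := fun u => ∫ s in (0:ℝ)..u, ∑ i, ∑ j, x (max s 0) i j with hFdef
    have hv : ∀ s, 0 ≤ s → HasDerivAt
        (fun u => ((∑ i, ∑ j, x u i j) - 1) * Real.exp (-(ρ * F u))) 0 s := by
      intro s hs
      have h1 : HasDerivAt (fun u => (∑ i, ∑ j, x u i j) - 1)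
          (ρ * ((∑ i, ∑ j, x s i j) ^ 2 - ∑ i, ∑ j, x s i j)) s :=
        (hSderiv s hs).sub_const 1
      have h2 : HasDerivAt (fun u => Real.exp (-(ρ * F u)))
          (Real.exp (-(ρ * F s)) * (-(ρ * (∑ i, ∑ j, x (max s 0) i j)))) s :=
        (((hF s).const_mul ρ).neg).exp
      have hmax : max s 0 = s := max_eq_left hs
      rw [hmax] at h2
      refine (h1.fun_mul h2).congr_deriv ?_
      ring
    have hv0 := aux_const_of_deriv hv t ht
    have hF0 : F 0 = 0 := intervalIntegral.integral_same
    rw [hF0, hsum0] at hv0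
    simp only [sub_self, zero_mul] at hv0
    have hexp : Real.exp (-(ρ * F t)) ≠ 0 := Real.exp_ne_zero _
    have := mul_eq_zero.1 hv0
    rcases this with h | h
    · linarith [sub_eq_zero.1 (by linarith [h] : (∑ i, ∑ j, x t i j) - 1 = 0)]
    · exact absurd h hexp
  -- Step E: marginals are constant on `[0,∞)`.
  have hp : ∀ t, 0 ≤ t → ∀ i, (∑ j, x t i j) = ∑ j, x 0 i j := by
    intro t ht i
    refine aux_const_of_deriv (f := fun s => ∑ j, x s i j) ?_ t ht
    intro s hs
    have h1 : HasDerivAt (fun u => ∑ j, x u i j)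
        (∑ j, ρ * ((∑ j', x s i j') * (∑ i', x s i' j) - x s i j)) s :=
      HasDerivAt.fun_sum fun j _ => hode s hs i j
    convert h1 using 1
    have e2 : (∑ j, ∑ i', x s i' j) = ∑ i, ∑ j, x s i j := Finset.sum_comm
    calc (0:ℝ) = ρ * ((∑ j', x s i j') * (∑ j, ∑ i', x s i' j) - ∑ j, x s i j) := by
          rw [e2, hS1 s hs]; ring
      _ = ∑ j, ρ * ((∑ j', x s i j') * (∑ i', x s i' j) - x s i j) := by
          simp only [mul_sub, Finset.mul_sum, Finset.sum_sub_distrib]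
  have hq : ∀ t, 0 ≤ t → ∀ j, (∑ i, x t i j) = ∑ i, x 0 i j := by
    intro t ht j
    refine aux_const_of_deriv (f := fun s => ∑ i, x s i j) ?_ t ht
    intro s hs
    have h1 : HasDerivAt (fun u => ∑ i, x u i j)
        (∑ i, ρ * ((∑ j', x s i j') * (∑ i', x s i' j) - x s i j)) s :=
      HasDerivAt.fun_sum fun i _ => hode s hs i j
    convert h1 using 1
    calc (0:ℝ) = ρ * ((∑ i, ∑ j', x s i j') * (∑ i', x s i' j) - ∑ i, x s i j) := by
          rw [show (∑ i, ∑ j', x s i j') = ∑ i, ∑ j, x s i j from rfl, hS1 s hs]; ring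
      _ = ρ * ((∑ i, (∑ j', x s i j') * (∑ i', x s i' j)) - ∑ i, x s i j) := by
          rw [Finset.sum_mul]
      _ = ∑ i, ρ * ((∑ j', x s i j') * (∑ i', x s i' j) - x s i j) := by
          simp only [mul_sub, Finset.mul_sum, Finset.sum_sub_distrib]
  -- Step F: positivity of marginals and closed form of the solution.
  have hKne : (Finset.univ : Finset (Fin K)).Nonempty := ⟨⟨0, hK⟩, Finset.mem_univ _⟩
  have hLne : (Finset.univ : Finset (Fin L)).Nonempty := ⟨⟨0, hL⟩, Finset.mem_univ _⟩
  have hppos : ∀ i, 0 < ∑ j', x 0 i j' := fun i => Finset.sum_pos (fun j _ => hx0 i j) hLne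
  have hqpos : ∀ j, 0 < ∑ i', x 0 i' j := fun j => Finset.sum_pos (fun i _ => hx0 i j) hKne
  have hA : ∀ i j, 0 < (∑ j', x 0 i j') * (∑ i', x 0 i' j) :=
    fun i j => mul_pos (hppos i) (hqpos j)
  have hAC : ∀ i j, 0 < (∑ j', x 0 i j') * (∑ i', x 0 i' j)
      + (x 0 i j - (∑ j', x 0 i j') * (∑ i', x 0 i' j)) := fun i j => by
    have := hx0 i j; linarith
  have hclosed : ∀ t, 0 ≤ t → ∀ i j, x t i j = (∑ j', x 0 i j') * (∑ i', x 0 i' j)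
      + (x 0 i j - (∑ j', x 0 i j') * (∑ i', x 0 i' j)) * Real.exp (-(ρ * t)) := by
    intro t ht i j
    have hw : ∀ s, 0 ≤ s → HasDerivAt
        (fun u => (x u i j - (∑ j', x 0 i j') * (∑ i', x 0 i' j)) * Real.exp (ρ * u)) 0 s := by
      intro s hs
      have h1 : HasDerivAt (fun u => x u i j - (∑ j', x 0 i j') * (∑ i', x 0 i' j))
          (ρ * ((∑ j', x s i j') * (∑ i', x s i' j) - x s i j)) s := (hode s hs i j).sub_const _
      have h2 : HasDerivAt (fun u : ℝ => Real.exp (ρ * u)) (Real.exp (ρ * s) * ρ) s := by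
        simpa using ((hasDerivAt_id s).const_mul ρ).exp
      have h3 := h1.fun_mul h2
      refine h3.congr_deriv ?_
      rw [hp s hs i, hq s hs j]
      ring
    have h0 := aux_const_of_deriv hw t ht
    have h0' : (x t i j - (∑ j', x 0 i j') * (∑ i', x 0 i' j)) * Real.exp (ρ * t)
        = x 0 i j - (∑ j', x 0 i j') * (∑ i', x 0 i' j) := by simpa using h0
    have hexp : Real.exp (ρ * t) * Real.exp (-(ρ * t)) = 1 := by
      rw [← Real.exp_add]; simp
    have : x t i j - (∑ j', x 0 i j') * (∑ i', x 0 i' j)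
        = (x 0 i j - (∑ j', x 0 i j') * (∑ i', x 0 i' j)) * Real.exp (-(ρ * t)) := by
      calc x t i j - (∑ j', x 0 i j') * (∑ i', x 0 i' j)
          = (x t i j - (∑ j', x 0 i j') * (∑ i', x 0 i' j))
            * (Real.exp (ρ * t) * Real.exp (-(ρ * t))) := by rw [hexp, mul_one]
        _ = ((x t i j - (∑ j', x 0 i j') * (∑ i', x 0 i' j)) * Real.exp (ρ * t))
            * Real.exp (-(ρ * t)) := by ring
        _ = (x 0 i j - (∑ j', x 0 i j') * (∑ i', x 0 i' j)) * Real.exp (-(ρ * t)) := by rw [h0']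
    linarith
  -- Step G: the integral of the original integrand equals that of the closed form.
  have hEq : ∀ T : ℝ, 0 ≤ T →
      (∫ t in (0:ℝ)..T, ∑ i, ∑ j,
        (x t i j - (∑ j', x t i j') * (∑ i', x t i' j)) ^ 2 / x t i j)
      = ∫ t in (0:ℝ)..T, ∑ i, ∑ j,
          ((x 0 i j - (∑ j', x 0 i j') * (∑ i', x 0 i' j)) * Real.exp (-(ρ * t))) ^ 2
          / ((∑ j', x 0 i j') * (∑ i', x 0 i' j)
            + (x 0 i j - (∑ j', x 0 i j') * (∑ i', x 0 i' j)) * Real.exp (-(ρ * t))) := by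
    intro T hT
    apply intervalIntegral.integral_congr
    intro t htm
    rw [Set.uIcc_of_le hT] at htm
    have ht0 : 0 ≤ t := htm.1
    apply Finset.sum_congr rfl
    intro i _
    apply Finset.sum_congr rfl
    intro j _
    rw [hp t ht0 i, hq t ht0 j, hclosed t ht0 i j, add_sub_cancel_left]
  -- Step H: the limit from the auxiliary lemma.
  have htend := aux_integral_tendsto K L ρ hρ
    (fun i j => (∑ j', x 0 i j') * (∑ i', x 0 i' j))
    (fun i j => x 0 i j - (∑ j', x 0 i j') * (∑ i', x 0 i' j)) hA hAC
  -- Step I: identify the limit value.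
  have hsumC : ∑ i, ∑ j, (x 0 i j - (∑ j', x 0 i j') * (∑ i', x 0 i' j)) = 0 := by
    have h1 : ∑ i, ∑ j, ((∑ j', x 0 i j') * (∑ i', x 0 i' j)) = 1 := by
      calc ∑ i, ∑ j, ((∑ j', x 0 i j') * (∑ i', x 0 i' j))
          = (∑ i, ∑ j', x 0 i j') * (∑ j, ∑ i', x 0 i' j) := by
            rw [Finset.sum_mul_sum]
        _ = 1 := by
            rw [show (∑ j, ∑ i', x 0 i' j) = ∑ i, ∑ j, x 0 i j from Finset.sum_comm,
              hsum0, mul_one]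
    simp only [Finset.sum_sub_distrib]
    rw [hsum0, h1, sub_self]
  have hval : (∑ i, ∑ j, ρ⁻¹ * (((∑ j', x 0 i j') * (∑ i', x 0 i' j))
        * Real.log ((∑ j', x 0 i j') * (∑ i', x 0 i' j))))
      - (∑ i, ∑ j, ρ⁻¹ * (((∑ j', x 0 i j') * (∑ i', x 0 i' j))
        * Real.log ((∑ j', x 0 i j') * (∑ i', x 0 i' j)
          + (x 0 i j - (∑ j', x 0 i j') * (∑ i', x 0 i' j)))
        - (x 0 i j - (∑ j', x 0 i j') * (∑ i', x 0 i' j))))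
      = ρ⁻¹ * ∑ i, ∑ j, (∑ j', x 0 i j') * (∑ i', x 0 i' j) *
        Real.log ((∑ j', x 0 i j') * (∑ i', x 0 i' j) / x 0 i j) := by
    calc _ = ∑ i, ∑ j, (ρ⁻¹ * (((∑ j', x 0 i j') * (∑ i', x 0 i' j))
          * Real.log ((∑ j', x 0 i j') * (∑ i', x 0 i' j)))
        - ρ⁻¹ * (((∑ j', x 0 i j') * (∑ i', x 0 i' j))
          * Real.log ((∑ j', x 0 i j') * (∑ i', x 0 i' j)
            + (x 0 i j - (∑ j', x 0 i j') * (∑ i', x 0 i' j)))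
          - (x 0 i j - (∑ j', x 0 i j') * (∑ i', x 0 i' j)))) := by
          simp only [Finset.sum_sub_distrib]
      _ = ∑ i, ∑ j, (ρ⁻¹ * ((∑ j', x 0 i j') * (∑ i', x 0 i' j) *
            Real.log ((∑ j', x 0 i j') * (∑ i', x 0 i' j) / x 0 i j))
          + ρ⁻¹ * (x 0 i j - (∑ j', x 0 i j') * (∑ i', x 0 i' j))) := by
          apply Finset.sum_congr rfl
          intro i _
          apply Finset.sum_congr rfl
          intro j _
          rw [show (∑ j', x 0 i j') * (∑ i', x 0 i' j)
              + (x 0 i j - (∑ j', x 0 i j') * (∑ i', x 0 i' j)) = x 0 i j from by ring,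
            Real.log_div (hA i j).ne' (hx0 i j).ne']
          ring
      _ = (∑ i, ∑ j, ρ⁻¹ * ((∑ j', x 0 i j') * (∑ i', x 0 i' j) *
            Real.log ((∑ j', x 0 i j') * (∑ i', x 0 i' j) / x 0 i j)))
          + ρ⁻¹ * ∑ i, ∑ j, (x 0 i j - (∑ j', x 0 i j') * (∑ i', x 0 i' j)) := by
          simp only [Finset.sum_add_distrib, Finset.mul_sum]
      _ = _ := by
          rw [hsumC, mul_zero, add_zero]
          simp only [Finset.mul_sum]
  rw [← hval]
  refine Tendsto.congr' ?_ htend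
  filter_upwards [eventually_ge_atTop (0:ℝ)] with T hT
  exact (hEq T hT).symm
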